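/- arXiv:2309.08155 — 2 statements merged into one kernel-verified Lean document; each statement's English description precedes it below -/
import Mathlib

section
/- For any probability ensemble E of unitaries on H, the frame potential satisfies F^{(k)}_E ≥ F^{(k)}_{Haar}, where Haar denotes the full unitary group U(H), and F^{(k)}_{Haar} equals the dimension of the commutant Comm_k(U(H)). -/
open MeasureTheory Matrix

attribute [local instance] Matrix.normedAddCommGroup Matrix.normedSpace

/-- The `k`-fold tensor power of a matrix. -/
noncomputable def tensorPow {ι : Type*} [Fintype ι] (k : ℕ) (A : Matrix ι ι ℂ) :
    Matrix (Fin k → ι) (Fin k → ι) ℂ :=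
  fun i j => ∏ a : Fin k, A (i a) (j a)

/-- The commutant `Comm_k(U(H))` of the full unitary group, as a submodule of
`End(H^{⊗k})`. -/
noncomputable def commSubmodule (ι : Type*) [Fintype ι] [DecidableEq ι] (k : ℕ) :
    Submodule ℂ (Matrix (Fin k → ι) (Fin k → ι) ℂ) where
  carrier := {M | ∀ U : Matrix.unitaryGroup ι ℂ,
    tensorPow k (U : Matrix ι ι ℂ) * M = M * tensorPow k (U : Matrix ι ι ℂ)}
  add_mem' := by
    intro a b ha hb U
    rw [mul_add, add_mul, ha U, hb U]
  zero_mem' := by intro U; simp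
  smul_mem' := by
    intro c a ha U
    rw [Matrix.mul_smul, Matrix.smul_mul, ha U]

namespace FramePotentialAux

variable {ι : Type*} [Fintype ι] [DecidableEq ι] {k : ℕ}

lemma tensorPow_mul (k : ℕ) (A B : Matrix ι ι ℂ) :
    tensorPow k (A * B) = tensorPow k A * tensorPow k B := by
  ext i j
  simp only [tensorPow, Matrix.mul_apply]
  rw [Fintype.prod_sum fun a x => A (i a) x * B x (j a)]
  refine Finset.sum_congr rfl fun x _ => ?_
  rw [Finset.prod_mul_distrib]

lemma tensorPow_conjTranspose (k : ℕ) (A : Matrix ι ι ℂ) :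
    tensorPow k Aᴴ = (tensorPow k A)ᴴ := by
  ext i j
  simp only [tensorPow, Matrix.conjTranspose_apply, Matrix.star_apply]
  rw [star_prod]

lemma tensorPow_one (k : ℕ) :
    tensorPow (ι := ι) k (1 : Matrix ι ι ℂ) = 1 := by
  ext i j
  by_cases h : i = j
  · subst h
    simp [tensorPow, Matrix.one_apply]
  · obtain ⟨a, ha⟩ := Function.ne_iff.mp h
    rw [Matrix.one_apply_ne h]
    exact Finset.prod_eq_zero (Finset.mem_univ a) (Matrix.one_apply_ne ha)

lemma trace_tensorPow (k : ℕ) (A : Matrix ι ι ℂ) :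
    (tensorPow k A).trace = A.trace ^ k := by
  simp only [Matrix.trace, Matrix.diag, tensorPow]
  rw [← Fintype.prod_sum fun (a : Fin k) (x : ι) => A x x]
  simp

/-- The superoperator `X ↦ A^{⊗k} X (A^{⊗k})ᴴ`, vectorized as a matrix. -/
noncomputable def Phi (k : ℕ) (A : Matrix ι ι ℂ) :
    Matrix ((Fin k → ι) × (Fin k → ι)) ((Fin k → ι) × (Fin k → ι)) ℂ :=
  fun i j => tensorPow k A i.1 j.1 * (starRingEnd ℂ) (tensorPow k A i.2 j.2)

lemma Phi_mul (k : ℕ) (A B : Matrix ι ι ℂ) : Phi k (A * B) = Phi k A * Phi k B := by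
  ext i j
  simp only [Phi, tensorPow_mul, Matrix.mul_apply, map_sum, Fintype.sum_prod_type]
  rw [Finset.sum_mul_sum]
  refine Finset.sum_congr rfl fun x₁ _ => Finset.sum_congr rfl fun x₂ _ => ?_
  rw [RingHom.map_mul]
  ring

lemma Phi_conjTranspose (k : ℕ) (A : Matrix ι ι ℂ) : Phi k Aᴴ = (Phi k A)ᴴ := by
  ext i j
  simp only [Phi, tensorPow_conjTranspose, Matrix.conjTranspose_apply, Matrix.star_apply]
  simp only [Complex.star_def, RingHom.map_mul, Complex.conj_conj]

lemma trace_Phi (k : ℕ) (A : Matrix ι ι ℂ) :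
    (Phi k A).trace = ((‖A.trace‖ ^ (2 * k) : ℝ) : ℂ) := by
  have h1 : ∑ i : Fin k → ι, tensorPow k A i i = A.trace ^ k := by
    simpa [Matrix.trace, Matrix.diag] using trace_tensorPow k A
  calc (Phi k A).trace
      = (∑ i : Fin k → ι, tensorPow k A i i) *
        (starRingEnd ℂ) (∑ i : Fin k → ι, tensorPow k A i i) := by
        simp only [Matrix.trace, Matrix.diag, Phi, Fintype.sum_prod_type, map_sum]
        rw [← Finset.sum_mul_sum]
    _ = A.trace ^ k * (starRingEnd ℂ) (A.trace ^ k) := by rw [h1]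
    _ = ((Complex.normSq (A.trace ^ k) : ℝ) : ℂ) := Complex.mul_conj _
    _ = ((‖A.trace‖ ^ (2 * k) : ℝ) : ℂ) := by
        norm_cast
        rw [Complex.normSq_eq_norm_sq, norm_pow, ← pow_mul, mul_comm k 2]


/-! ### The superoperator picture -/

/-- Linear equivalence between functions on pairs and matrices. -/
noncomputable def matEquiv {m : Type*} : ((m × m) → ℂ) ≃ₗ[ℂ] Matrix m m ℂ where
  toFun v := Matrix.of fun a b => v (a, b)
  invFun X p := X p.1 p.2
  map_add' _ _ := rfl
  map_smul' _ _ := rfl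
  left_inv _ := rfl
  right_inv _ := rfl

/-- The linear endomorphism of matrix space encoded by a big matrix. -/
noncomputable def superMap {m : Type*} [Fintype m] [DecidableEq m] (M : Matrix (m × m) (m × m) ℂ) :
    Matrix m m ℂ →ₗ[ℂ] Matrix m m ℂ :=
  (matEquiv (m := m)).conj (Matrix.toLin' M)

lemma superMap_apply {m : Type*} [Fintype m] [DecidableEq m] (M : Matrix (m × m) (m × m) ℂ)
    (X : Matrix m m ℂ) (a b : m) :
    superMap M X a b = ∑ j : m × m, M (a, b) j * X j.1 j.2 := by
  simp [superMap, matEquiv, LinearEquiv.conj_apply, Matrix.toLin'_apply, Matrix.mulVec,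
    dotProduct]
  rfl

lemma superMap_mul {m : Type*} [Fintype m] [DecidableEq m] (M N : Matrix (m × m) (m × m) ℂ)
    (X : Matrix m m ℂ) :
    superMap (M * N) X = superMap M (superMap N X) := by
  simp [superMap, Matrix.toLin'_mul, LinearEquiv.conj_apply]

lemma trace_superMap {m : Type*} [Fintype m] [DecidableEq m] (M : Matrix (m × m) (m × m) ℂ) :
    LinearMap.trace ℂ (Matrix m m ℂ) (superMap M) = M.trace := by
  rw [superMap, LinearMap.trace_conj',
    LinearMap.trace_eq_matrix_trace ℂ (Pi.basisFun ℂ (m × m)),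
    LinearMap.toMatrix_eq_toMatrix', LinearMap.toMatrix'_toLin']

lemma superMap_Phi (A : Matrix ι ι ℂ) (X : Matrix (Fin k → ι) (Fin k → ι) ℂ) :
    superMap (Phi k A) X = tensorPow k A * X * (tensorPow k A)ᴴ := by
  ext a b
  rw [superMap_apply]
  simp only [Phi, Matrix.mul_apply, Matrix.conjTranspose_apply, Matrix.star_apply,
    Finset.sum_mul, Fintype.sum_prod_type, Complex.star_def]
  rw [Finset.sum_comm]
  refine Finset.sum_congr rfl fun j₂ _ => Finset.sum_congr rfl fun j₁ _ => ?_
  ring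

lemma tensorPow_mul_conjTranspose_self (U : Matrix.unitaryGroup ι ℂ) :
    tensorPow k (U : Matrix ι ι ℂ) * (tensorPow k (U : Matrix ι ι ℂ))ᴴ = 1 := by
  rw [← tensorPow_conjTranspose, ← tensorPow_mul, ← Matrix.star_eq_conjTranspose,
    Unitary.mul_star_self_of_mem U.2, tensorPow_one]

lemma tensorPow_conjTranspose_mul_self (U : Matrix.unitaryGroup ι ℂ) :
    (tensorPow k (U : Matrix ι ι ℂ))ᴴ * tensorPow k (U : Matrix ι ι ℂ) = 1 := by
  rw [← tensorPow_conjTranspose, ← tensorPow_mul, ← Matrix.star_eq_conjTranspose,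
    Unitary.star_mul_self_of_mem U.2, tensorPow_one]

lemma trace_mul_form {m : Type*} [Fintype m] (A B : Matrix m m ℂ) :
    (A * B).trace = ∑ p : m × m, A p.1 p.2 * B p.2 p.1 := by
  conv_rhs => rw [Fintype.sum_prod_type]
  simp [Matrix.trace, Matrix.diag, Matrix.mul_apply]

lemma trace_mul_conjTranspose_form {m : Type*} [Fintype m] (A B : Matrix m m ℂ) :
    (A * Bᴴ).trace = ∑ p : m × m, A p.1 p.2 * (starRingEnd ℂ) (B p.1 p.2) := by
  rw [trace_mul_form]
  exact Finset.sum_congr rfl fun p _ => rfl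

/-! ### Integration -/

section Measures

variable [MeasurableSpace (Matrix.unitaryGroup ι ℂ)] [BorelSpace (Matrix.unitaryGroup ι ℂ)]

lemma continuous_coe_entry (a b : ι) :
    Continuous fun U : Matrix.unitaryGroup ι ℂ => (U : Matrix ι ι ℂ) a b :=
  (continuous_apply b).comp ((continuous_apply a).comp continuous_subtype_val)

lemma continuous_Phi (i j : (Fin k → ι) × (Fin k → ι)) :
    Continuous fun U : Matrix.unitaryGroup ι ℂ => Phi k (U : Matrix ι ι ℂ) i j := by
  apply Continuous.mul
  · exact continuous_finset_prod _ fun a _ => continuous_coe_entry _ _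
  · exact Complex.continuous_conj.comp
      (continuous_finset_prod _ fun a _ => continuous_coe_entry _ _)

lemma norm_tensorPow_le (U : Matrix.unitaryGroup ι ℂ) (p q : Fin k → ι) :
    ‖tensorPow k (U : Matrix ι ι ℂ) p q‖ ≤ 1 := by
  rw [tensorPow, norm_prod]
  refine Finset.prod_le_one (fun a _ => norm_nonneg _) fun a _ => ?_
  exact entry_norm_bound_of_unitary U.2 _ _

lemma norm_Phi_le (U : Matrix.unitaryGroup ι ℂ) (i j : (Fin k → ι) × (Fin k → ι)) :
    ‖Phi k (U : Matrix ι ι ℂ) i j‖ ≤ 1 := by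
  rw [Phi, norm_mul]
  have h2 : ‖(starRingEnd ℂ) (tensorPow k (U : Matrix ι ι ℂ) i.2 j.2)‖ ≤ 1 := by
    rw [RCLike.norm_conj]
    exact norm_tensorPow_le U _ _
  calc ‖tensorPow k (U : Matrix ι ι ℂ) i.1 j.1‖ *
        ‖(starRingEnd ℂ) (tensorPow k (U : Matrix ι ι ℂ) i.2 j.2)‖
      ≤ 1 * 1 := mul_le_mul (norm_tensorPow_le U _ _) h2 (norm_nonneg _) zero_le_one
    _ = 1 := one_mul 1

lemma integrable_Phi (ρ : Measure (Matrix.unitaryGroup ι ℂ)) [IsFiniteMeasure ρ]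
    (i j : (Fin k → ι) × (Fin k → ι)) :
    Integrable (fun U : Matrix.unitaryGroup ι ℂ => Phi k (U : Matrix ι ι ℂ) i j) ρ :=
  ⟨(continuous_Phi i j).aestronglyMeasurable,
    HasFiniteIntegral.of_bounded (C := 1) (Filter.Eventually.of_forall fun U => norm_Phi_le U i j)⟩

lemma integrable_Phi_star (ρ : Measure (Matrix.unitaryGroup ι ℂ)) [IsFiniteMeasure ρ]
    (i j : (Fin k → ι) × (Fin k → ι)) :
    Integrable (fun U : Matrix.unitaryGroup ι ℂ =>
      (Phi k (U : Matrix ι ι ℂ))ᴴ i j) ρ := by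
  have : (fun U : Matrix.unitaryGroup ι ℂ => (Phi k (U : Matrix ι ι ℂ))ᴴ i j)
      = fun U : Matrix.unitaryGroup ι ℂ => (starRingEnd ℂ) (Phi k ((U : Matrix ι ι ℂ)) j i) :=
    rfl
  rw [this]
  exact ⟨(Complex.continuous_conj.comp (continuous_Phi j i)).aestronglyMeasurable,
    HasFiniteIntegral.of_bounded (C := 1) (Filter.Eventually.of_forall fun U => by
      simpa using norm_Phi_le U j i)⟩

/-- The moment matrix of an ensemble. -/
noncomputable def Tmat (k : ℕ) (ρ : Measure (Matrix.unitaryGroup ι ℂ)) :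
    Matrix ((Fin k → ι) × (Fin k → ι)) ((Fin k → ι) × (Fin k → ι)) ℂ :=
  Matrix.of fun i j => ∫ U, Phi k (U : Matrix ι ι ℂ) i j ∂ρ

variable (μ : Measure (Matrix.unitaryGroup ι ℂ)) [μ.IsHaarMeasure] [IsProbabilityMeasure μ]

lemma Phi_mul_Tmat (W : Matrix.unitaryGroup ι ℂ) :
    Phi k (W : Matrix ι ι ℂ) * Tmat k μ = Tmat k μ := by
  ext i j
  simp only [Matrix.mul_apply, Tmat, Matrix.of_apply]
  have h1 : ∀ x, Phi k (W : Matrix ι ι ℂ) i x * ∫ U, Phi k (U : Matrix ι ι ℂ) x j ∂μ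
      = ∫ U, Phi k (W : Matrix ι ι ℂ) i x * Phi k (U : Matrix ι ι ℂ) x j ∂μ :=
    fun x => (integral_const_mul _ _).symm
  rw [Finset.sum_congr rfl fun x _ => h1 x,
    ← integral_finset_sum _ fun x _ => (integrable_Phi μ x j).const_mul _]
  have h2 : ∀ U : Matrix.unitaryGroup ι ℂ,
      (∑ x, Phi k (W : Matrix ι ι ℂ) i x * Phi k (U : Matrix ι ι ℂ) x j)
        = Phi k ((↑(W * U) : Matrix ι ι ℂ)) i j := by
    intro U
    rw [show ((↑(W * U) : Matrix ι ι ℂ)) = (W : Matrix ι ι ℂ) * (U : Matrix ι ι ℂ) from rfl,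
      Phi_mul, Matrix.mul_apply]
  simp only [h2]
  exact integral_mul_left_eq_self (fun V : Matrix.unitaryGroup ι ℂ =>
    Phi k (V : Matrix ι ι ℂ) i j) W

lemma Tmat_conjTranspose_apply (ρ : Measure (Matrix.unitaryGroup ι ℂ)) [IsFiniteMeasure ρ]
    (i j : (Fin k → ι) × (Fin k → ι)) :
    (Tmat k ρ)ᴴ i j = ∫ U, (Phi k ((U : Matrix ι ι ℂ)))ᴴ i j ∂ρ := by
  simp only [Matrix.conjTranspose_apply, Tmat, Matrix.of_apply, Matrix.star_apply]
  rw [show (star (∫ U, Phi k ((U : Matrix ι ι ℂ)) j i ∂ρ) : ℂ)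
    = (starRingEnd ℂ) (∫ U, Phi k ((U : Matrix ι ι ℂ)) j i ∂ρ) from rfl, ← integral_conj]
  rfl

lemma TmatH_mul_Phi (W : Matrix.unitaryGroup ι ℂ) :
    (Tmat k μ)ᴴ * Phi k (W : Matrix ι ι ℂ) = (Tmat k μ)ᴴ := by
  ext i j
  simp only [Matrix.mul_apply]
  have h1 : ∀ x, (Tmat k μ)ᴴ i x * Phi k (W : Matrix ι ι ℂ) x j
      = ∫ U, (Phi k ((U : Matrix ι ι ℂ)))ᴴ i x * Phi k (W : Matrix ι ι ℂ) x j ∂μ := by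
    intro x
    rw [Tmat_conjTranspose_apply μ, integral_mul_const]
  rw [Finset.sum_congr rfl fun x _ => h1 x,
    ← integral_finset_sum _ fun x _ => (integrable_Phi_star μ i x).mul_const _,
    Tmat_conjTranspose_apply μ]
  have h2 : ∀ U : Matrix.unitaryGroup ι ℂ,
      (∑ x, (Phi k ((U : Matrix ι ι ℂ)))ᴴ i x * Phi k (W : Matrix ι ι ℂ) x j)
        = (Phi k (((W⁻¹ * U : Matrix.unitaryGroup ι ℂ) : Matrix ι ι ℂ)))ᴴ i j := by
    intro U
    have hc : (((W⁻¹ * U : Matrix.unitaryGroup ι ℂ) : Matrix ι ι ℂ))ᴴ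
        = ((U : Matrix ι ι ℂ))ᴴ * (W : Matrix ι ι ℂ) := by
      rw [show ((↑(W⁻¹ * U) : Matrix ι ι ℂ)) = (↑(W⁻¹) : Matrix ι ι ℂ) * (U : Matrix ι ι ℂ)
          from rfl,
        ← Unitary.star_eq_inv, show ((↑(star W) : Matrix ι ι ℂ)) = star (W : Matrix ι ι ℂ)
          from rfl]
      rw [← Matrix.star_eq_conjTranspose, ← Matrix.star_eq_conjTranspose]
      simp
    conv_rhs => rw [← Phi_conjTranspose, hc, Phi_mul]
    rw [Phi_conjTranspose, Matrix.mul_apply]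
  simp only [h2]
  exact integral_mul_left_eq_self (fun V : Matrix.unitaryGroup ι ℂ =>
    (Phi k ((V : Matrix ι ι ℂ)))ᴴ i j) W⁻¹

lemma TmatH_mul_Tmat (ρ : Measure (Matrix.unitaryGroup ι ℂ)) [IsProbabilityMeasure ρ] :
    (Tmat k μ)ᴴ * Tmat k ρ = (Tmat k μ)ᴴ := by
  ext i j
  rw [Matrix.mul_apply]
  have h1 : ∀ x, (Tmat k μ)ᴴ i x * Tmat k ρ x j
      = ∫ V, (Tmat k μ)ᴴ i x * Phi k ((V : Matrix ι ι ℂ)) x j ∂ρ := by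
    intro x
    rw [show Tmat k ρ x j = ∫ V, Phi k ((V : Matrix ι ι ℂ)) x j ∂ρ from rfl]
    exact (integral_const_mul _ _).symm
  rw [Finset.sum_congr rfl fun x _ => h1 x,
    ← integral_finset_sum _ fun x _ => (integrable_Phi ρ x j).const_mul _,
    show ((Tmat k μ)ᴴ i j : ℂ) = ∫ _V, (Tmat k μ)ᴴ i j ∂ρ by
      simp [integral_const, measure_univ]]
  refine integral_congr_ae (Filter.Eventually.of_forall fun V => ?_)
  show (∑ x, (Tmat k μ)ᴴ i x * Phi k ((V : Matrix ι ι ℂ)) x j) = (Tmat k μ)ᴴ i j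
  rw [← Matrix.mul_apply, TmatH_mul_Phi (k := k) μ V]

lemma integral_trace_mul_PhiH (ρ : Measure (Matrix.unitaryGroup ι ℂ)) [IsProbabilityMeasure ρ]
    (B : Matrix ((Fin k → ι) × (Fin k → ι)) ((Fin k → ι) × (Fin k → ι)) ℂ) :
    ∫ V, (B * (Phi k ((V : Matrix ι ι ℂ)))ᴴ).trace ∂ρ = (B * (Tmat k ρ)ᴴ).trace := by
  simp only [trace_mul_form]
  rw [integral_finset_sum _ fun p _ => ((integrable_Phi_star ρ p.2 p.1).const_mul _)]
  refine Finset.sum_congr rfl fun p _ => ?_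
  rw [integral_const_mul, Tmat_conjTranspose_apply ρ]

lemma integral_trace_Phi_mul (ρ : Measure (Matrix.unitaryGroup ι ℂ)) [IsProbabilityMeasure ρ]
    (C : Matrix ((Fin k → ι) × (Fin k → ι)) ((Fin k → ι) × (Fin k → ι)) ℂ) :
    ∫ U, ((Phi k ((U : Matrix ι ι ℂ))) * C).trace ∂ρ = (Tmat k ρ * C).trace := by
  simp only [trace_mul_form]
  rw [integral_finset_sum _ fun p _ => ((integrable_Phi ρ p.1 p.2).mul_const _)]
  exact Finset.sum_congr rfl fun p _ => integral_mul_const _ _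

lemma F_formula (ρ : Measure (Matrix.unitaryGroup ι ℂ)) [IsProbabilityMeasure ρ] :
    ((∫ U, ∫ V, ‖((U : Matrix ι ι ℂ) * (V : Matrix ι ι ℂ)ᴴ).trace‖ ^ (2 * k)
        ∂ρ ∂ρ : ℝ) : ℂ)
      = (Tmat k ρ * (Tmat k ρ)ᴴ).trace := by
  have inner : ∀ U : Matrix.unitaryGroup ι ℂ,
      ((∫ V, ‖((U : Matrix ι ι ℂ) * (V : Matrix ι ι ℂ)ᴴ).trace‖ ^ (2 * k) ∂ρ : ℝ) : ℂ)
        = ((Phi k ((U : Matrix ι ι ℂ))) * (Tmat k ρ)ᴴ).trace := by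
    intro U
    have hpt : ∀ V : Matrix.unitaryGroup ι ℂ,
        ((‖((U : Matrix ι ι ℂ) * (V : Matrix ι ι ℂ)ᴴ).trace‖ ^ (2 * k) : ℝ) : ℂ)
          = ((Phi k ((U : Matrix ι ι ℂ))) * (Phi k ((V : Matrix ι ι ℂ)))ᴴ).trace := by
      intro V
      rw [← trace_Phi, Phi_mul, Phi_conjTranspose]
    calc ((∫ V, ‖((U : Matrix ι ι ℂ) * (V : Matrix ι ι ℂ)ᴴ).trace‖ ^ (2 * k)
            ∂ρ : ℝ) : ℂ)
        = ∫ V, ((‖((U : Matrix ι ι ℂ) * (V : Matrix ι ι ℂ)ᴴ).trace‖ ^ (2 * k)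
            : ℝ) : ℂ) ∂ρ := (integral_ofReal).symm
      _ = ∫ V, ((Phi k ((U : Matrix ι ι ℂ))) * (Phi k ((V : Matrix ι ι ℂ)))ᴴ).trace ∂ρ := by
          simp only [hpt]
      _ = ((Phi k ((U : Matrix ι ι ℂ))) * (Tmat k ρ)ᴴ).trace := integral_trace_mul_PhiH ρ _
  calc ((∫ U, ∫ V, ‖((U : Matrix ι ι ℂ) * (V : Matrix ι ι ℂ)ᴴ).trace‖ ^ (2 * k)
          ∂ρ ∂ρ : ℝ) : ℂ)
      = ∫ U, ((∫ V, ‖((U : Matrix ι ι ℂ) * (V : Matrix ι ι ℂ)ᴴ).trace‖ ^ (2 * k)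
          ∂ρ : ℝ) : ℂ) ∂ρ := (integral_ofReal).symm
    _ = ∫ U, ((Phi k ((U : Matrix ι ι ℂ))) * (Tmat k ρ)ᴴ).trace ∂ρ := by simp only [inner]
    _ = (Tmat k ρ * (Tmat k ρ)ᴴ).trace := integral_trace_Phi_mul ρ _

lemma isProj_superMap : LinearMap.IsProj (commSubmodule ι k) (superMap (Tmat k μ)) := by
  constructor
  · intro X W
    have h1 : superMap (Phi k ((W : Matrix ι ι ℂ))) (superMap (Tmat k μ) X)
        = superMap (Tmat k μ) X := by
      rw [← superMap_mul, Phi_mul_Tmat]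
    rw [superMap_Phi] at h1
    calc tensorPow k ((W : Matrix ι ι ℂ)) * superMap (Tmat k μ) X
        = tensorPow k ((W : Matrix ι ι ℂ)) * superMap (Tmat k μ) X *
            ((tensorPow k ((W : Matrix ι ι ℂ)))ᴴ * tensorPow k ((W : Matrix ι ι ℂ))) := by
          rw [tensorPow_conjTranspose_mul_self, mul_one]
      _ = (tensorPow k ((W : Matrix ι ι ℂ)) * superMap (Tmat k μ) X *
            (tensorPow k ((W : Matrix ι ι ℂ)))ᴴ) * tensorPow k ((W : Matrix ι ι ℂ)) := by
          simp only [mul_assoc]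
      _ = superMap (Tmat k μ) X * tensorPow k ((W : Matrix ι ι ℂ)) := by rw [h1]
  · intro X hX
    ext a b
    rw [superMap_apply]
    have h1 : ∀ j : (Fin k → ι) × (Fin k → ι), Tmat k μ (a, b) j * X j.1 j.2
        = ∫ U, Phi k ((U : Matrix ι ι ℂ)) (a, b) j * X j.1 j.2 ∂μ := by
      intro j
      rw [show Tmat k μ (a, b) j = ∫ U, Phi k ((U : Matrix ι ι ℂ)) (a, b) j ∂μ from rfl]
      exact (integral_mul_const _ _).symm
    rw [Finset.sum_congr rfl fun j _ => h1 j,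
      ← integral_finset_sum _ fun j _ => (integrable_Phi μ _ _).mul_const _]
    have hpt : ∀ U : Matrix.unitaryGroup ι ℂ,
        (∑ j : (Fin k → ι) × (Fin k → ι), Phi k ((U : Matrix ι ι ℂ)) (a, b) j * X j.1 j.2)
          = X a b := by
      intro U
      have h2 : tensorPow k ((U : Matrix ι ι ℂ)) * X * (tensorPow k ((U : Matrix ι ι ℂ)))ᴴ
          = X := by
        rw [hX U, mul_assoc, tensorPow_mul_conjTranspose_self, mul_one]
      calc (∑ j : (Fin k → ι) × (Fin k → ι), Phi k ((U : Matrix ι ι ℂ)) (a, b) j * X j.1 j.2)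
          = superMap (Phi k ((U : Matrix ι ι ℂ))) X a b := (superMap_apply _ _ _ _).symm
        _ = X a b := by rw [superMap_Phi, h2]
    simp only [hpt]
    simp [measure_univ]

lemma trace_Tmat_eq_finrank :
    (Tmat k μ).trace = (Module.finrank ℂ (commSubmodule ι k) : ℂ) := by
  rw [← trace_superMap (Tmat k μ)]
  exact (isProj_superMap μ).trace

end Measures

end FramePotentialAux


open FramePotentialAux in
/-- the frame potential of any probability ensemble of unitaries is
at least the Haar frame potential, and the Haar frame potential equals the
dimension of the commutant `Comm_k(U(H))`. -/
theorem framePotential_ge_haar {ι : Type*} [Fintype ι] [DecidableEq ι]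
    [MeasurableSpace (Matrix.unitaryGroup ι ℂ)] [BorelSpace (Matrix.unitaryGroup ι ℂ)]
    (μ : Measure (Matrix.unitaryGroup ι ℂ)) [μ.IsHaarMeasure] [IsProbabilityMeasure μ]
    (ν : Measure (Matrix.unitaryGroup ι ℂ)) [IsProbabilityMeasure ν] (k : ℕ)
    (FE FHaar : ℝ)
    (hFE : FE = ∫ U, ∫ V,
        ‖((U : Matrix ι ι ℂ) * (V : Matrix ι ι ℂ)ᴴ).trace‖ ^ (2 * k) ∂ν ∂ν)
    (hFHaar : FHaar = ∫ U, ∫ V,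
        ‖((U : Matrix ι ι ℂ) * (V : Matrix ι ι ℂ)ᴴ).trace‖ ^ (2 * k) ∂μ ∂μ) :
    FHaar = Module.finrank ℂ (commSubmodule ι k) ∧ FE ≥ FHaar := by
  have hμF : ((FHaar : ℝ) : ℂ) = (Tmat k μ * (Tmat k μ)ᴴ).trace := by
    rw [hFHaar]; exact F_formula μ
  have hνF : ((FE : ℝ) : ℂ) = (Tmat k ν * (Tmat k ν)ᴴ).trace := by
    rw [hFE]; exact F_formula ν
  have hself : (Tmat k μ * (Tmat k μ)ᴴ).trace = ((Tmat k μ)ᴴ).trace := by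
    rw [Matrix.trace_mul_comm, TmatH_mul_Tmat μ μ]
  have hcross : (Tmat k ν * (Tmat k μ)ᴴ).trace = ((Tmat k μ)ᴴ).trace := by
    rw [Matrix.trace_mul_comm, TmatH_mul_Tmat μ ν]
  have htr : ((Tmat k μ)ᴴ).trace = ((Module.finrank ℂ (commSubmodule ι k) : ℝ) : ℂ) := by
    rw [Matrix.trace_conjTranspose, trace_Tmat_eq_finrank μ]
    simp
  have h1 : FHaar = (Module.finrank ℂ (commSubmodule ι k) : ℝ) := by
    have h := hμF.trans (hself.trans htr)
    exact_mod_cast h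
  refine ⟨by exact_mod_cast h1, ?_⟩
  have hABc : (Tmat k ν * (Tmat k μ)ᴴ).trace = ((FHaar : ℝ) : ℂ) := by
    rw [hcross, ← hself, ← hμF]
  have hBAc : (Tmat k μ * (Tmat k ν)ᴴ).trace = ((FHaar : ℝ) : ℂ) := by
    have h2 : Tmat k μ * (Tmat k ν)ᴴ = (Tmat k ν * (Tmat k μ)ᴴ)ᴴ := by
      rw [Matrix.conjTranspose_mul, Matrix.conjTranspose_conjTranspose]
    rw [h2, Matrix.trace_conjTranspose, hABc]
    exact Complex.conj_ofReal _
  set A := Tmat k ν with hA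
  set B := Tmat k μ with hB
  have hexp : ((FE - FHaar : ℝ) : ℂ)
      = ∑ p : ((Fin k → ι) × (Fin k → ι)) × ((Fin k → ι) × (Fin k → ι)),
          ((A - B) p.1 p.2 * (starRingEnd ℂ) ((A - B) p.1 p.2)) := by
    have e1 : ∑ p : ((Fin k → ι) × (Fin k → ι)) × ((Fin k → ι) × (Fin k → ι)),
          ((A - B) p.1 p.2 * (starRingEnd ℂ) ((A - B) p.1 p.2))
        = (A * Aᴴ).trace - (A * Bᴴ).trace - (B * Aᴴ).trace + (B * Bᴴ).trace := by
      rw [trace_mul_conjTranspose_form, trace_mul_conjTranspose_form,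
        trace_mul_conjTranspose_form, trace_mul_conjTranspose_form,
        ← Finset.sum_sub_distrib, ← Finset.sum_sub_distrib, ← Finset.sum_add_distrib]
      refine Finset.sum_congr rfl fun p _ => ?_
      simp only [Matrix.sub_apply, map_sub]
      ring
    rw [e1, ← hνF, hABc, hBAc, ← hμF]
    push_cast
    ring
  have hreal : FE - FHaar = ∑ p : ((Fin k → ι) × (Fin k → ι)) × ((Fin k → ι) × (Fin k → ι)),
      Complex.normSq ((A - B) p.1 p.2) := by
    have h3 : ((FE - FHaar : ℝ) : ℂ)
        = ((∑ p : ((Fin k → ι) × (Fin k → ι)) × ((Fin k → ι) × (Fin k → ι)),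
            Complex.normSq ((A - B) p.1 p.2) : ℝ) : ℂ) := by
      rw [hexp]
      push_cast
      exact Finset.sum_congr rfl fun p _ => Complex.mul_conj _
    exact_mod_cast h3
  have h4 : 0 ≤ FE - FHaar := hreal ▸ Finset.sum_nonneg fun p _ => Complex.normSq_nonneg _
  linarith
end

section
/- Let τ be a Hermitian involution on H. Then the averaged fourth-moment operator (1/2π)∫_0^{2π} (e^{-itτ})^{⊗2} ⊗ (e^{itτ})^{⊗2} dt equals (1/8)(3·IIII + 3·ττττ + IτIτ + IττI + τIIτ + τIτI − IIττ − ττII), where concatenation denotes the fourfold tensor product with I or τ in the indicated slots. -/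
open Matrix Kronecker MeasureTheory

attribute [local instance] Matrix.normedAddCommGroup Matrix.normedSpace

/-- Fourfold Kronecker (tensor) product. -/
noncomputable def kron4 {ι : Type*} [Fintype ι] (X Y Z W : Matrix ι ι ℂ) :
    Matrix ((ι × ι) × ι × ι) ((ι × ι) × ι × ι) ℂ :=
  (X ⊗ₖ Y) ⊗ₖ (Z ⊗ₖ W)

lemma exp_smul_invol {ι : Type*} [Fintype ι] [DecidableEq ι] (τ : Matrix ι ι ℂ)
    (hinv : τ * τ = 1) (z : ℂ) :
    NormedSpace.exp (z • τ) =
      Complex.exp z • ((2⁻¹ : ℂ) • (1 + τ)) + Complex.exp (-z) • ((2⁻¹ : ℂ) • (1 - τ)) := by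
  have h2 : τ ^ 2 = 1 := by rw [sq]; exact hinv
  have hsum : HasSum (fun n : ℕ => ((n.factorial : ℂ)⁻¹) • (z • τ) ^ n)
      (Complex.cosh z • (1 : Matrix ι ι ℂ) + Complex.sinh z • τ) := by
    refine HasSum.even_add_odd ?_ ?_
    · have h : ∀ k : ℕ, (((2*k).factorial : ℂ)⁻¹) • (z • τ) ^ (2*k)
          = (z ^ (2*k) / ((2*k).factorial : ℂ)) • (1 : Matrix ι ι ℂ) := by
        intro k
        simp only [smul_pow, pow_mul, h2, one_pow, smul_smul]
        congr 1
        field_simp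
      simp only [h]
      exact (Complex.hasSum_cosh z).smul_const 1
    · have h : ∀ k : ℕ, (((2*k+1).factorial : ℂ)⁻¹) • (z • τ) ^ (2*k+1)
          = (z ^ (2*k+1) / ((2*k+1).factorial : ℂ)) • τ := by
        intro k
        have hτ : τ ^ (2*k+1) = τ := by rw [pow_succ, pow_mul, h2, one_pow, one_mul]
        rw [smul_pow, hτ, smul_smul]
        congr 1
        field_simp
      simp only [h]
      exact (Complex.hasSum_sinh z).smul_const τ
  simp only [NormedSpace.exp_eq_tsum ℂ]
  rw [hsum.tsum_eq]
  simp only [Complex.cosh, Complex.sinh]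
  module

lemma pointwise_kron4 {ι : Type*} [Fintype ι] (P Q : Matrix ι ι ℂ) (t : ℝ) :
    kron4 (Complex.exp (-(Complex.I * t)) • P + Complex.exp (Complex.I * t) • Q)
           (Complex.exp (-(Complex.I * t)) • P + Complex.exp (Complex.I * t) • Q)
           (Complex.exp (Complex.I * t) • P + Complex.exp (-(Complex.I * t)) • Q)
           (Complex.exp (Complex.I * t) • P + Complex.exp (-(Complex.I * t)) • Q)
    = (kron4 P P P P + kron4 Q Q Q Q + kron4 P Q P Q + kron4 P Q Q P
        + kron4 Q P P Q + kron4 Q P Q P)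
      + Complex.exp ((-4 * Complex.I) * t) • kron4 P P Q Q
      + Complex.exp ((4 * Complex.I) * t) • kron4 Q Q P P
      + Complex.exp ((-2 * Complex.I) * t) •
          (kron4 P P P Q + kron4 P P Q P + kron4 P Q Q Q + kron4 Q P Q Q)
      + Complex.exp ((2 * Complex.I) * t) •
          (kron4 Q Q Q P + kron4 Q Q P Q + kron4 Q P P P + kron4 P Q P P) := by
  simp only [kron4, add_kronecker, kronecker_add, smul_kronecker, kronecker_smul,
    smul_smul, smul_add, ← Complex.exp_add]
  ring_nf
  simp only [Complex.exp_zero, one_smul]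
  module

lemma final_algebra {ι : Type*} [Fintype ι] [DecidableEq ι] (τ : Matrix ι ι ℂ) :
    (kron4 ((2⁻¹:ℂ) • (1 + τ)) ((2⁻¹:ℂ) • (1 + τ)) ((2⁻¹:ℂ) • (1 + τ)) ((2⁻¹:ℂ) • (1 + τ))
      + kron4 ((2⁻¹:ℂ) • (1 - τ)) ((2⁻¹:ℂ) • (1 - τ)) ((2⁻¹:ℂ) • (1 - τ)) ((2⁻¹:ℂ) • (1 - τ))
      + kron4 ((2⁻¹:ℂ) • (1 + τ)) ((2⁻¹:ℂ) • (1 - τ)) ((2⁻¹:ℂ) • (1 + τ)) ((2⁻¹:ℂ) • (1 - τ))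
      + kron4 ((2⁻¹:ℂ) • (1 + τ)) ((2⁻¹:ℂ) • (1 - τ)) ((2⁻¹:ℂ) • (1 - τ)) ((2⁻¹:ℂ) • (1 + τ))
      + kron4 ((2⁻¹:ℂ) • (1 - τ)) ((2⁻¹:ℂ) • (1 + τ)) ((2⁻¹:ℂ) • (1 + τ)) ((2⁻¹:ℂ) • (1 - τ))
      + kron4 ((2⁻¹:ℂ) • (1 - τ)) ((2⁻¹:ℂ) • (1 + τ)) ((2⁻¹:ℂ) • (1 - τ)) ((2⁻¹:ℂ) • (1 + τ))) =
    (1 / 8 : ℂ) •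
      ((3 : ℂ) • kron4 1 1 1 1 + (3 : ℂ) • kron4 τ τ τ τ +
        kron4 1 τ 1 τ + kron4 1 τ τ 1 + kron4 τ 1 1 τ + kron4 τ 1 τ 1 -
        kron4 1 1 τ τ - kron4 τ τ 1 1) := by
  have h : (1 - τ) = 1 + (-1:ℂ) • τ := by
    rw [sub_eq_add_neg, neg_smul, one_smul]
  rw [h]
  simp only [kron4, add_kronecker, kronecker_add,
    smul_kronecker, kronecker_smul, smul_smul, smul_add, smul_sub]
  module

/-- for a Hermitian involution `τ`, the averaged fourth-moment
operator `(1/2π)∫₀^{2π} (e^{-itτ})^{⊗2} ⊗ (e^{itτ})^{⊗2} dt` equals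
`(1/8)(3·IIII + 3·ττττ + IτIτ + IττI + τIIτ + τIτI − IIττ − ττII)`. -/
theorem averaged_fourth_moment {ι : Type*} [Fintype ι] [DecidableEq ι]
    (τ : Matrix ι ι ℂ) (hherm : τᴴ = τ) (hinv : τ * τ = 1) :
    (1 / (2 * Real.pi) : ℝ) •
      (∫ t in (0 : ℝ)..(2 * Real.pi),
        kron4 (NormedSpace.exp ((-(Complex.I * t)) • τ))
              (NormedSpace.exp ((-(Complex.I * t)) • τ))
              (NormedSpace.exp ((Complex.I * t) • τ))
              (NormedSpace.exp ((Complex.I * t) • τ))) =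
    (1 / 8 : ℂ) •
      ((3 : ℂ) • kron4 1 1 1 1 + (3 : ℂ) • kron4 τ τ τ τ +
        kron4 1 τ 1 τ + kron4 1 τ τ 1 + kron4 τ 1 1 τ + kron4 τ 1 τ 1 -
        kron4 1 1 τ τ - kron4 τ τ 1 1) := by
  have hcs : CompleteSpace (Matrix ((ι × ι) × ι × ι) ((ι × ι) × ι × ι) ℂ) :=
    FiniteDimensional.complete ℂ _
  have hC : ∀ (c : ℂ) (M : Matrix ((ι × ι) × ι × ι) ((ι × ι) × ι × ι) ℂ),
      @IntervalIntegrable _ _ NormedAddGroup.toENormedAddMonoid (fun t : ℝ => Complex.exp (c * t) • M)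
        MeasureTheory.volume 0 (2 * Real.pi) := by
    intro c M
    apply Continuous.intervalIntegrable
    exact (Complex.continuous_exp.comp (continuous_const.mul Complex.continuous_ofReal)).smul
      continuous_const
  have key : ∀ n : ℤ, Complex.exp (((n : ℂ) * Complex.I) * ((2 * Real.pi : ℝ) : ℂ)) = 1 := by
    intro n
    rw [show ((n : ℂ) * Complex.I) * ((2 * Real.pi : ℝ) : ℂ)
        = (n : ℂ) * (2 * (Real.pi : ℂ) * Complex.I) by push_cast; ring]
    exact Complex.exp_int_mul_two_pi_mul_I n
  simp only [exp_smul_invol τ hinv, neg_neg, pointwise_kron4]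
  rw [intervalIntegral.integral_add
        (((intervalIntegrable_const.add (hC _ _)).add (hC _ _)).add (hC _ _)) (hC _ _),
      intervalIntegral.integral_add
        ((intervalIntegrable_const.add (hC _ _)).add (hC _ _)) (hC _ _),
      intervalIntegral.integral_add
        (intervalIntegrable_const.add (hC _ _)) (hC _ _),
      intervalIntegral.integral_add intervalIntegrable_const (hC _ _),
      intervalIntegral.integral_const,
      intervalIntegral.integral_smul_const, intervalIntegral.integral_smul_const,
      intervalIntegral.integral_smul_const, intervalIntegral.integral_smul_const,
      integral_exp_mul_complex (by simp [Complex.ext_iff] : (-4 : ℂ) * Complex.I ≠ 0),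
      integral_exp_mul_complex (by simp [Complex.ext_iff] : (4 : ℂ) * Complex.I ≠ 0),
      integral_exp_mul_complex (by simp [Complex.ext_iff] : (-2 : ℂ) * Complex.I ≠ 0),
      integral_exp_mul_complex (by simp [Complex.ext_iff] : (2 : ℂ) * Complex.I ≠ 0)]
  have e1 : ((-4 : ℂ) * Complex.I) = (((-4 : ℤ) : ℂ) * Complex.I) := by norm_num
  have e2 : ((4 : ℂ) * Complex.I) = (((4 : ℤ) : ℂ) * Complex.I) := by norm_num
  have e3 : ((-2 : ℂ) * Complex.I) = (((-2 : ℤ) : ℂ) * Complex.I) := by norm_num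
  have e4 : ((2 : ℂ) * Complex.I) = (((2 : ℤ) : ℂ) * Complex.I) := by norm_num
  rw [e1, e2, e3, e4, key, key, key, key]
  simp only [Complex.ofReal_zero, mul_zero, Complex.exp_zero, sub_self, zero_div, zero_smul,
    add_zero, sub_zero]
  rw [smul_smul]
  rw [show (1 / (2 * Real.pi)) * (2 * Real.pi) = 1 by
    field_simp]
  rw [one_smul]
  exact final_algebra τ
end
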